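/- Let M = ⟨C, {G^{(1)}, …, G^{(ξ)}}⟩ be a matrix zonotope in ℝ^{n_x×m_a}, let Q̄ ∈ ℝ^{n_s×n_x}, Ȳ ∈ ℝ^{n_s×m_a}, and R̄ ∈ ℝ^{n_s×m_a}. Let Θ ∈ M satisfy the entrywise side-information bound |Q̄Θ − Ȳ| ≤ R̄ (i.e., |(Q̄Θ − Ȳ)_{ij}| ≤ R̄_{ij} for all i, j). Then Θ belongs to the constrained matrix zonotope N = ⟨C, Ḡ, A, B⟩ with ξ + n_s·m_a generators, where: the first ξ generators are G^{(1)}, …, G^{(ξ)} and the remaining n_s·m_a generators are zero matrices; the first ξ constraint matrices are A^{(i)} = Q̄ G^{(i)} for i = 1,…,ξ, and for each pair (i, j) with i ∈ {1,…,n_s}, j ∈ {1,…,m_a} there is an additional constraint matrix −E_i R̄ E_j, where E_i = diag(e_i) ∈ ℝ^{n_s×n_s} and E_j = diag(e_j) ∈ ℝ^{m_a×m_a} (so −E_i R̄ E_j has entry −R̄_{ij} in position (i,j) and zeros elsewhere); and B = Ȳ − Q̄ C. -/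

import Mathlib

open Matrix

/-- If `Θ` belongs to the matrix zonotope `⟨C, {G^{(i)}}⟩` and
satisfies the entrywise side information `|Q̄Θ − Ȳ| ≤ R̄`, then `Θ` belongs to
the constrained matrix zonotope with center `C`, generators `G^{(i)}` followed
by `n_s · m_a` zero generators, constraint matrices `Q̄G^{(i)}` followed by
`−E_i R̄ E_j`, and offset `B = Ȳ − Q̄C`. -/
theorem stmt_11 {nx ma ns ξ : ℕ}
    (C : Matrix (Fin nx) (Fin ma) ℝ) (G : Fin ξ → Matrix (Fin nx) (Fin ma) ℝ)
    (Q : Matrix (Fin ns) (Fin nx) ℝ) (Y R : Matrix (Fin ns) (Fin ma) ℝ)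
    (Θ : Matrix (Fin nx) (Fin ma) ℝ)
    (hmem : ∃ β : Fin ξ → ℝ, (∀ i, |β i| ≤ 1) ∧ Θ = C + ∑ i, β i • G i)
    (hside : ∀ i j, |(Q * Θ - Y) i j| ≤ R i j) :
    ∃ β : Fin ξ ⊕ (Fin ns × Fin ma) → ℝ, (∀ i, |β i| ≤ 1) ∧
      (∑ i : Fin ξ ⊕ (Fin ns × Fin ma), β i •
          (Sum.elim (fun i => Q * G i)
            (fun p : Fin ns × Fin ma =>
              -(Matrix.single p.1 p.2 (R p.1 p.2))) i)) = Y - Q * C ∧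
      Θ = C + ∑ i : Fin ξ ⊕ (Fin ns × Fin ma), β i •
          (Sum.elim G (fun _ : Fin ns × Fin ma =>
            (0 : Matrix (Fin nx) (Fin ma) ℝ)) i) := by
  obtain ⟨β, hβ, hΘ⟩ := hmem
  set γ : Fin ns × Fin ma → ℝ := fun p =>
    if R p.1 p.2 = 0 then 0 else (Q * Θ - Y) p.1 p.2 / R p.1 p.2 with hγdef
  have hγR : ∀ p : Fin ns × Fin ma, γ p * R p.1 p.2 = (Q * Θ - Y) p.1 p.2 := by
    intro p
    by_cases h : R p.1 p.2 = 0
    · have := hside p.1 p.2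
      rw [h] at this
      have hx : (Q * Θ - Y) p.1 p.2 = 0 := abs_nonpos_iff.mp this
      simp [hγdef, h, hx]
    · simp [hγdef, h, div_mul_cancel₀]
  have hγ1 : ∀ p : Fin ns × Fin ma, |γ p| ≤ 1 := by
    intro p
    by_cases h : R p.1 p.2 = 0
    · simp [hγdef, h]
    · have hle := hside p.1 p.2
      have hRpos : 0 < R p.1 p.2 :=
        lt_of_le_of_ne (le_trans (abs_nonneg _) hle) (Ne.symm h)
      simp only [hγdef, if_neg h, abs_div, abs_of_pos hRpos]
      rw [div_le_one hRpos]
      exact hle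
  refine ⟨Sum.elim β γ, ?_, ?_, ?_⟩
  · rintro (i | p)
    · exact hβ i
    · exact hγ1 p
  · rw [Fintype.sum_sum_type]
    simp only [Sum.elim_inl, Sum.elim_inr]
    have h1 : ∑ i, β i • (Q * G i) = Q * Θ - Q * C := by
      rw [hΘ]
      simp [Matrix.mul_add, Matrix.mul_sum, Matrix.mul_smul]
    have h2 : ∑ p : Fin ns × Fin ma,
        γ p • -(Matrix.single p.1 p.2 (R p.1 p.2)) = -(Q * Θ - Y) := by
      ext i j
      simp only [Matrix.sum_apply, Matrix.smul_apply, Matrix.neg_apply,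
        smul_eq_mul, Matrix.neg_apply]
      rw [Finset.sum_eq_single (i, j)]
      · rw [mul_neg, Matrix.single_apply_same, hγR]
      · intro p _ hp
        have : ¬(p.1 = i ∧ p.2 = j) := by
          intro ⟨h1, h2⟩
          exact hp (Prod.ext h1 h2)
        simp [Matrix.single, this]
      · intro h
        exact absurd (Finset.mem_univ _) h
    rw [h1, h2]
    abel
  · rw [Fintype.sum_sum_type]
    simp [hΘ]
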